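/- Let n be a positive natural number, let D_A and D_B be n×n real matrices, let d ∈ ℝⁿ, and let ε > 0 be a real number. Define the diagonal matrix Ψ = diag(e^{d_1}, …, e^{d_n}), define N = Ψ·(D_Aᵀ·D_A + D_B − D_Bᵀ + ε·I), and define D_zw = exp(−N). Then every eigenvalue μ ∈ ℂ of D_zw (viewing D_zw as a complex matrix) satisfies |μ| < 1; that is, the spectral radius of D_zw is strictly less than 1. -/

import Mathlib

open Matrix NormedSpace

attribute [local instance] Matrix.linftyOpNormedRing Matrix.linftyOpNormedAlgebra

private lemma specrad_aux_exp_eigen {n : ℕ} (A : Matrix (Fin n) (Fin n) ℂ) (c : ℂ) (w : Fin n → ℂ)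
    (h : A *ᵥ w = c • w) : NormedSpace.exp A *ᵥ w = Complex.exp c • w := by
  have hpow : ∀ k : ℕ, A ^ k *ᵥ w = c ^ k • w := by
    intro k
    induction k with
    | zero => simp
    | succ k ih =>
      rw [pow_succ, pow_succ, ← mulVec_mulVec, h, mulVec_smul, ih, smul_smul, mul_comm]
  let L0 : Matrix (Fin n) (Fin n) ℂ →ₗ[ℂ] (Fin n → ℂ) :=
    { toFun := fun M => M *ᵥ w
      map_add' := fun M N' => add_mulVec M N' w
      map_smul' := fun r M => smul_mulVec r M w }
  let L : Matrix (Fin n) (Fin n) ℂ →L[ℂ] (Fin n → ℂ) :=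
    ⟨L0, L0.continuous_of_finiteDimensional⟩
  have hsum : Summable fun k : ℕ => ((Nat.factorial k : ℂ)⁻¹) • A ^ k := expSeries_summable' (𝕂 := ℂ) A
  calc NormedSpace.exp A *ᵥ w = L (∑' k : ℕ, ((Nat.factorial k : ℂ)⁻¹) • A ^ k) := by
        simp only [exp_eq_tsum ℂ]; rfl
    _ = ∑' k : ℕ, L (((Nat.factorial k : ℂ)⁻¹) • A ^ k) := L.map_tsum hsum
    _ = ∑' k : ℕ, (((Nat.factorial k : ℂ)⁻¹) * c ^ k) • w := by
        refine tsum_congr fun k => ?_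
        rw [L.map_smul]
        show ((Nat.factorial k : ℂ)⁻¹) • (A ^ k *ᵥ w) = _
        rw [hpow k, smul_smul]
    _ = (∑' k : ℕ, ((Nat.factorial k : ℂ)⁻¹) * c ^ k) • w := by
        refine (Summable.tsum_smul_const ?_ w)
        simpa [smul_eq_mul] using expSeries_summable' (𝕂 := ℂ) c
    _ = Complex.exp c • w := by
        congr 1
        rw [Complex.exp_eq_exp_ℂ, exp_eq_tsum ℂ]
        simp [smul_eq_mul]


private lemma specrad_aux_eigenpair (n : ℕ) (Ac : Matrix (Fin n) (Fin n) ℂ) (μ : ℂ)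
    (hμ : μ ∈ spectrum ℂ (NormedSpace.exp (-Ac))) :
    ∃ (lam : ℂ) (w : Fin n → ℂ), w ≠ 0 ∧ Ac *ᵥ w = lam • w ∧
      (NormedSpace.exp (-Ac)) *ᵥ w = μ • w := by
  set Bc := NormedSpace.exp (-Ac) with hBc
  have hμ' : Module.End.HasEigenvalue (Matrix.toLin' Bc) μ := by
    rw [Module.End.hasEigenvalue_iff_mem_spectrum]
    rwa [show Matrix.toLin' Bc = Matrix.toLinAlgEquiv' Bc from rfl,
      AlgEquiv.spectrum_eq Matrix.toLinAlgEquiv']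
  obtain ⟨v, hv⟩ := hμ'.exists_hasEigenvector
  set E := Module.End.eigenspace (Matrix.toLin' Bc) μ with hE
  have hmemE : ∀ x, x ∈ E ↔ Bc *ᵥ x = μ • x := by
    intro x
    rw [hE, Module.End.mem_eigenspace_iff, Matrix.toLin'_apply]
  have hcomm : Ac * Bc = Bc * Ac := ((Commute.refl Ac).neg_right.exp_right).eq
  have hMaps : ∀ x ∈ E, (Matrix.toLin' Ac) x ∈ E := by
    intro x hx
    rw [hmemE] at hx ⊢
    rw [Matrix.toLin'_apply, mulVec_mulVec, ← hcomm, ← mulVec_mulVec, hx, mulVec_smul]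
  let g := (Matrix.toLin' Ac).restrict hMaps
  have hvE : v ∈ E := hv.1
  haveI : Nontrivial E := by
    refine ⟨⟨v, hvE⟩, 0, ?_⟩
    simp only [ne_eq, Submodule.mk_eq_zero]
    exact hv.2
  obtain ⟨lam, hlam⟩ := Module.End.exists_eigenvalue g
  obtain ⟨w', hw'⟩ := hlam.exists_hasEigenvector
  refine ⟨lam, (w' : Fin n → ℂ), ?_, ?_, ?_⟩
  · simpa [ne_eq, Submodule.coe_eq_zero] using hw'.2
  · have h1 : g w' = lam • w' := hw'.apply_eq_smul
    have h2 : ((g w' : E) : Fin n → ℂ) = Ac *ᵥ (w' : Fin n → ℂ) := by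
      simp [g, LinearMap.restrict_apply, Matrix.toLin'_apply]
    rw [← h2, h1]
    rfl
  · exact (hmemE _).mp w'.2


private lemma specrad_aux_re_pos (n : ℕ) (DA DB : Matrix (Fin n) (Fin n) ℝ) (d : Fin n → ℝ) (ε : ℝ) (hε : 0 < ε)
    (lam : ℂ) (w : Fin n → ℂ) (hw : w ≠ 0)
    (hAw : ((Matrix.diagonal fun i => Real.exp (d i)) *
        (DAᵀ * DA + DB - DBᵀ + ε • (1 : Matrix (Fin n) (Fin n) ℝ))).map Complex.ofReal *ᵥ w
        = lam • w) :
    0 < lam.re := by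
  set S : Matrix (Fin n) (Fin n) ℝ := DAᵀ * DA + DB - DBᵀ + ε • 1 with hSdef
  set Sc : Matrix (Fin n) (Fin n) ℂ := S.map Complex.ofReal with hScdef
  set Ψc : Matrix (Fin n) (Fin n) ℂ := Matrix.diagonal (fun i => (Real.exp (d i) : ℂ)) with hΨc
  set P : Matrix (Fin n) (Fin n) ℂ := Matrix.diagonal (fun i => ((Real.exp (d i))⁻¹ : ℂ)) with hP
  have hmapmul : ((Matrix.diagonal fun i => Real.exp (d i)) * S).map Complex.ofReal
      = Ψc * Sc := by
    ext i j
    simp only [Matrix.map_apply, mul_apply, hΨc, hScdef, diagonal_apply, ite_mul, zero_mul,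
      Finset.sum_ite_eq, Finset.mem_univ, if_true]
    push_cast
    ring
  rw [hmapmul] at hAw
  have hPΨ : P * Ψc = 1 := by
    rw [hP, hΨc, diagonal_mul_diagonal]
    ext i j
    rcases eq_or_ne i j with rfl | hij
    · simp only [diagonal_apply_eq, Matrix.one_apply_eq]
      exact inv_mul_cancel₀ (by exact_mod_cast Real.exp_ne_zero (d i))
    · simp [Matrix.diagonal_apply_ne _ hij, Matrix.one_apply_ne hij]
  have hSw : Sc *ᵥ w = lam • (P *ᵥ w) := by
    have h1 : Sc *ᵥ w = (P * (Ψc * Sc)) *ᵥ w := by rw [← mul_assoc, hPΨ, one_mul]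
    rw [h1, ← mulVec_mulVec, hAw, mulVec_smul]
  set q : ℂ := star w ⬝ᵥ (Sc *ᵥ w) with hq
  set preal : ℝ := ∑ i, (Real.exp (d i))⁻¹ * Complex.normSq (w i) with hpreal
  have hp : star w ⬝ᵥ (P *ᵥ w) = (preal : ℂ) := by
    simp only [hP, dotProduct, mulVec_diagonal, Pi.star_apply, Complex.star_def]
    rw [hpreal]
    push_cast [Complex.normSq_eq_conj_mul_self, -Complex.ofReal_exp]
    refine Finset.sum_congr rfl fun i _ => ?_
    ring
  obtain ⟨i0, hi0⟩ : ∃ i, w i ≠ 0 := Function.ne_iff.mp hw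
  have hppos : 0 < preal := by
    refine Finset.sum_pos' (fun i _ => ?_) ⟨i0, Finset.mem_univ i0, ?_⟩
    · exact mul_nonneg (by positivity) (Complex.normSq_nonneg _)
    · exact mul_pos (by positivity) (Complex.normSq_pos.mpr hi0)
  have hqlam : q = lam * (preal : ℂ) := by rw [hq, hSw, dotProduct_smul, smul_eq_mul, hp]
  have hstarq : star q = star w ⬝ᵥ (Scᴴ *ᵥ w) := by
    rw [hq, star_dotProduct, star_star, star_mulVec, ← dotProduct_mulVec]
  have hScH : Scᴴ = (Sᵀ).map Complex.ofReal := by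
    ext i j
    simp [hScdef, conjTranspose_apply, Complex.conj_ofReal]
  have hH : Sᵀ = DAᵀ * DA + DBᵀ - DB + ε • 1 := by
    rw [hSdef]
    simp only [transpose_add, transpose_sub, transpose_smul, transpose_mul,
      transpose_transpose, transpose_one]
  have hSsum : Sc + Scᴴ = (2 : ℂ) • ((DAᵀ * DA).map Complex.ofReal)
      + ((2 * ε : ℝ) : ℂ) • (1 : Matrix (Fin n) (Fin n) ℂ) := by
    rw [hScH, hH, hScdef]
    ext i j
    simp only [Matrix.add_apply, Matrix.map_apply, Matrix.smul_apply, hH, hSdef,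
      Matrix.sub_apply, Matrix.one_apply, smul_eq_mul]
    split_ifs <;> push_cast <;> ring
  have hq2 : q + star q = star w ⬝ᵥ ((Sc + Scᴴ) *ᵥ w) := by
    rw [hq, hstarq, add_mulVec, dotProduct_add]
  -- the two nonnegative quadratic forms
  have hGdot : ∀ u : Fin n → ℂ, star u ⬝ᵥ u = ((∑ i, Complex.normSq (u i) : ℝ) : ℂ) := by
    intro u
    simp only [dotProduct, Pi.star_apply, Complex.star_def]
    push_cast [Complex.normSq_eq_conj_mul_self]
    rfl
  set DAc : Matrix (Fin n) (Fin n) ℂ := DA.map Complex.ofReal with hDAc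
  have hmm : (DAᵀ * DA).map Complex.ofReal = DAcᴴ * DAc := by
    ext i j
    simp only [Matrix.map_apply, mul_apply, conjTranspose_apply, hDAc, Complex.conj_ofReal,
      transpose_apply]
    push_cast
    simp [Complex.star_def, Complex.conj_ofReal]
  set a : ℝ := ∑ i, Complex.normSq ((DAc *ᵥ w) i) with ha
  set b : ℝ := ∑ i, Complex.normSq (w i) with hb
  have hq1 : star w ⬝ᵥ (((DAᵀ * DA).map Complex.ofReal) *ᵥ w) = (a : ℂ) := by
    rw [hmm, ← mulVec_mulVec, dotProduct_mulVec, ← star_mulVec, hGdot]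
  have hq0 : star w ⬝ᵥ ((1 : Matrix (Fin n) (Fin n) ℂ) *ᵥ w) = (b : ℂ) := by
    rw [one_mulVec, hGdot]
  have hqsum : q + star q = (2 : ℂ) * (a : ℂ) + ((2 * ε : ℝ) : ℂ) * (b : ℂ) := by
    rw [hq2, hSsum, add_mulVec, smul_mulVec, smul_mulVec, dotProduct_add,
      dotProduct_smul, dotProduct_smul, smul_eq_mul, smul_eq_mul, hq1, hq0]
  have ha0 : 0 ≤ a := Finset.sum_nonneg fun i _ => Complex.normSq_nonneg _
  have hb0 : 0 < b := by
    refine Finset.sum_pos' (fun i _ => Complex.normSq_nonneg _) ⟨i0, Finset.mem_univ i0, ?_⟩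
    exact Complex.normSq_pos.mpr hi0
  have hqre : 2 * q.re = 2 * a + 2 * ε * b := by
    have := congrArg Complex.re hqsum
    simp only [Complex.add_re, Complex.mul_re, Complex.ofReal_re, Complex.ofReal_im,
      Complex.re_ofNat, Complex.im_ofNat, Complex.star_def, Complex.conj_re] at this
    linarith
  have hqre' : q.re = lam.re * preal := by
    have := congrArg Complex.re hqlam
    simpa [Complex.mul_re] using this
  nlinarith [hppos, hε, ha0, hb0, hqre, hqre']


/-- The direct parameterization of the paper: with
`Ψ = diag(e^{d_1}, …, e^{d_n})`, `N = Ψ (D_Aᵀ D_A + D_B − D_Bᵀ + ε I)` (`ε > 0`) and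
`D_zw = exp (−N)`, every complex eigenvalue `μ` of `D_zw` satisfies `|μ| < 1`, i.e. the
spectral radius of `D_zw` is strictly less than `1`. -/
theorem spectral_radius_of_direct_parameterization_lt_one
    (n : ℕ) (hn : 0 < n) (DA DB : Matrix (Fin n) (Fin n) ℝ) (d : Fin n → ℝ)
    (ε : ℝ) (hε : 0 < ε)
    (Ψ : Matrix (Fin n) (Fin n) ℝ) (hΨ : Ψ = Matrix.diagonal fun i => Real.exp (d i))
    (N : Matrix (Fin n) (Fin n) ℝ)
    (hN : N = Ψ * (DAᵀ * DA + DB - DBᵀ + ε • (1 : Matrix (Fin n) (Fin n) ℝ)))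
    (Dzw : Matrix (Fin n) (Fin n) ℝ) (hD : Dzw = NormedSpace.exp (-N)) :
    ∀ μ ∈ spectrum ℂ (Dzw.map (Complex.ofReal)), ‖μ‖ < 1 := by
  intro μ hμ
  have hmap : Dzw.map Complex.ofReal = NormedSpace.exp (-(N.map Complex.ofReal)) := by
    rw [hD]
    have h := map_exp
      ((algebraMap ℝ ℂ).mapMatrix)
      (Continuous.matrix_map continuous_id Complex.continuous_ofReal) (-N)
    simp only [RingHom.mapMatrix_apply] at h
    have h2 : ((-N).map ⇑(algebraMap ℝ ℂ)) = -(N.map ⇑(algebraMap ℝ ℂ)) := by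
      ext i j; simp
    rw [show (Complex.ofReal : ℝ → ℂ) = ⇑(algebraMap ℝ ℂ) from rfl, ← h2]
    exact h
  rw [hmap] at hμ
  obtain ⟨lam, w, hw0, hAw, hBw⟩ := specrad_aux_eigenpair n (N.map Complex.ofReal) μ hμ
  have hexp : NormedSpace.exp (-(N.map Complex.ofReal)) *ᵥ w = Complex.exp (-lam) • w := by
    apply specrad_aux_exp_eigen
    rw [Matrix.neg_mulVec, hAw, neg_smul]
  have hμeq : μ = Complex.exp (-lam) := by
    have h0 : (μ - Complex.exp (-lam)) • w = 0 := by
      rw [sub_smul, ← hBw, ← hexp, sub_self]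
    rcases smul_eq_zero.mp h0 with h | h
    · exact sub_eq_zero.mp h
    · exact absurd h hw0
  have hre : 0 < lam.re := by
    apply specrad_aux_re_pos n DA DB d ε hε lam w hw0
    rw [hN, hΨ] at hAw
    exact hAw
  rw [hμeq, Complex.norm_exp]
  simp only [Complex.neg_re]
  rw [Real.exp_lt_one_iff]
  linarith
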